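/- A bounded subharmonic function on ℂ∖{w₀} whose logarithm is harmonic on the set where it is positive, and which is bounded above near w₀ and at infinity, is constant. -/

import Mathlib

/-- A function is subharmonic on an open set `S` if it is upper semicontinuous on `S`
and satisfies the sub-mean value inequality on circles whose closed disks lie in `S`. -/
def SubharmonicOn (u : ℂ → ℝ) (S : Set ℂ) : Prop :=
  UpperSemicontinuousOn u S ∧
  ∀ c : ℂ, ∀ r : ℝ, 0 < r → Metric.closedBall c r ⊆ S →
    u c ≤ (2 * Real.pi)⁻¹ * ∫ θ in (0:ℝ)..(2 * Real.pi), u (circleMap c r θ)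

/-- A function is harmonic on `S` if it is continuous on `S` and satisfies the mean
value equality on circles whose closed disks lie in `S`. -/
def HarmonicOnSet (h : ℂ → ℝ) (S : Set ℂ) : Prop :=
  ContinuousOn h S ∧
  ∀ c : ℂ, ∀ r : ℝ, 0 < r → Metric.closedBall c r ⊆ S →
    h c = (2 * Real.pi)⁻¹ * ∫ θ in (0:ℝ)..(2 * Real.pi), h (circleMap c r θ)

open Metric Set Real Filter MeasureTheory intervalIntegral Complex

-- usc attains max on compact
lemma usc_max {f : ℂ → ℝ} {K : Set ℂ} (hK : IsCompact K) (hne : K.Nonempty)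
    (hf : ∀ x ∈ K, UpperSemicontinuousAt f x) (M : ℝ) (hb : ∀ x ∈ K, f x ≤ M) :
    ∃ x ∈ K, ∀ y ∈ K, f y ≤ f x := by
  set T := f '' K with hT
  have hTne : T.Nonempty := hne.image f
  have hTb : BddAbove T := ⟨M, by rintro - ⟨x, hx, rfl⟩; exact hb x hx⟩
  set M₀ := sSup T with hM₀
  have hex : ∀ n : ℕ, ∃ x ∈ K, M₀ - 1/(n+1) < f x := by
    intro n
    have : M₀ - 1/(n+1) < M₀ := by
      have : (0:ℝ) < 1/(n+1) := by positivity
      linarith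
    obtain ⟨y, hy, hy2⟩ := exists_lt_of_lt_csSup hTne this
    obtain ⟨x, hx, rfl⟩ := hy
    exact ⟨x, hx, hy2⟩
  choose xs hxs hxs2 using hex
  obtain ⟨a, haK, φ, hφ, hten⟩ := hK.tendsto_subseq hxs
  refine ⟨a, haK, fun y hy => ?_⟩
  have hyM : f y ≤ M₀ := le_csSup hTb ⟨y, hy, rfl⟩
  suffices h : M₀ ≤ f a by linarith
  by_contra h
  push_neg at h
  have h2 := hf a haK ((f a + M₀)/2) (by linarith)
  have h3 : ∀ᶠ n in atTop, f (xs (φ n)) < (f a + M₀)/2 := hten.eventually h2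
  have h4 : Tendsto (fun n : ℕ => M₀ - 1/(φ n + 1)) atTop (nhds M₀) := by
    have : Tendsto (fun n : ℕ => 1/((φ n : ℝ)+1)) atTop (nhds 0) := by
      apply tendsto_one_div_add_atTop_nhds_zero_nat.comp hφ.tendsto_atTop
    simpa using tendsto_const_nhds.sub this
  have h5 : ∀ᶠ n in atTop, (f a + M₀)/2 < M₀ - 1/(φ n + 1) := by
    have := h4.eventually (eventually_gt_nhds (show (f a + M₀)/2 < M₀ by linarith))
    exact this
  obtain ⟨n, hn1, hn2⟩ := (h3.and h5).exists
  have := hxs2 (φ n)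
  push_cast at hn2 this
  linarith


lemma usc_at_of_on {u : ℂ → ℝ} {S : Set ℂ} (hS : IsOpen S) (hu : UpperSemicontinuousOn u S)
    {x : ℂ} (hx : x ∈ S) : UpperSemicontinuousAt u x := by
  intro y hy
  have := hu x hx y hy
  rwa [nhdsWithin_eq_nhds.mpr (hS.mem_nhds hx)] at this

lemma usc_circle {u : ℂ → ℝ} {w₀ c : ℂ} {r : ℝ} (hu : UpperSemicontinuousOn u {w₀}ᶜ)
    (hr : 0 ≤ r) (hball : closedBall c r ⊆ {w₀}ᶜ) (θ : ℝ) :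
    UpperSemicontinuousAt (fun θ => u (circleMap c r θ)) θ := by
  have hx : circleMap c r θ ∈ {w₀}ᶜ := hball (circleMap_mem_closedBall c hr θ)
  have h1 : UpperSemicontinuousAt u (circleMap c r θ) :=
    usc_at_of_on isOpen_compl_singleton hu hx
  intro y hy
  exact ((continuous_circleMap c r).continuousAt).tendsto.eventually (h1 y hy)

lemma int_circle {u : ℂ → ℝ} {w₀ c : ℂ} {r M : ℝ} (hu : UpperSemicontinuousOn u {w₀}ᶜ)
    (hr : 0 ≤ r) (hball : closedBall c r ⊆ {w₀}ᶜ)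
    (hM : ∀ w, w ≠ w₀ → |u w| ≤ M) :
    IntervalIntegrable (fun θ => u (circleMap c r θ)) volume 0 (2*π) := by
  have husc : UpperSemicontinuous (fun θ => u (circleMap c r θ)) := usc_circle hu hr hball
  have hmeas : Measurable (fun θ => u (circleMap c r θ)) := husc.measurable
  apply IntervalIntegrable.mono_fun (_root_.intervalIntegrable_const (c := M))
    hmeas.aestronglyMeasurable
  apply Filter.Eventually.of_forall
  intro θ
  have hne : circleMap c r θ ≠ w₀ := hball (circleMap_mem_closedBall c hr θ)
  calc ‖u (circleMap c r θ)‖ = |u (circleMap c r θ)| := rfl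
    _ ≤ M := hM _ hne
    _ ≤ ‖M‖ := le_abs_self M


lemma strict_mean {g : ℝ → ℝ} (husc : ∀ θ, UpperSemicontinuousAt g θ)
    (hint : IntervalIntegrable g volume 0 (2*π)) {m : ℝ} (hle : ∀ θ, g θ ≤ m)
    {θ₀ : ℝ} (hθ₀ : θ₀ ∈ Set.Icc 0 (2*π)) (hlt : g θ₀ < m) :
    ∫ θ in (0:ℝ)..(2*π), g θ < 2*π*m := by
  have h2π : (0:ℝ) < 2*π := by positivity
  set c' := (g θ₀ + m)/2 with hc'
  have hc'm : c' < m := by simp only [hc']; linarith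
  have hUopen : IsOpen {θ | g θ < c'} := by
    rw [isOpen_iff_mem_nhds]
    intro θ hθ
    exact husc θ c' hθ
  set V := {θ | g θ < c'} ∩ Ioo 0 (2*π) with hV
  have hVopen : IsOpen V := hUopen.inter isOpen_Ioo
  have hVne : V.Nonempty := by
    have hcl : θ₀ ∈ closure (Ioo 0 (2*π)) := by
      rw [closure_Ioo h2π.ne]; exact hθ₀
    rw [_root_.mem_closure_iff] at hcl
    obtain ⟨y, hy1, hy2⟩ := hcl _ hUopen (show θ₀ ∈ {θ | g θ < c'} by simp only [mem_setOf_eq, hc']; linarith)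
    exact ⟨y, hy1, hy2⟩
  have hVmeas : MeasurableSet V := hVopen.measurableSet
  have hVvol : 0 < (volume V).toReal := by
    have := hVopen.measure_pos volume hVne
    have hfin : volume V ≠ ⊤ := by
      have : volume V ≤ volume (Ioo 0 (2*π)) := measure_mono (inter_subset_right)
      exact (lt_of_le_of_lt this (by rw [Real.volume_Ioo]; exact ENNReal.ofReal_lt_top)).ne
    exact ENNReal.toReal_pos this.ne' hfin
  have hVsub : V ⊆ Ioc 0 (2*π) := inter_subset_right.trans Ioo_subset_Ioc_self
  -- split integral
  have hintIoc : IntegrableOn g (Ioc 0 (2*π)) volume := by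
    rw [intervalIntegrable_iff_integrableOn_Ioc_of_le h2π.le] at hint; exact hint
  have hsplit : Ioc 0 (2*π) = V ∪ (Ioc 0 (2*π) \ V) := by
    rw [union_diff_cancel hVsub]
  have hdisj : Disjoint V (Ioc 0 (2*π) \ V) := disjoint_sdiff_right
  have hintV : IntegrableOn g V volume := hintIoc.mono_set hVsub
  have hintD : IntegrableOn g (Ioc 0 (2*π) \ V) volume := hintIoc.mono_set diff_subset
  have hI : ∫ θ in (0:ℝ)..(2*π), g θ = (∫ θ in V, g θ) + ∫ θ in Ioc 0 (2*π) \ V, g θ := by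
    rw [intervalIntegral.integral_of_le h2π.le]
    nth_rewrite 1 [hsplit]
    exact setIntegral_union hdisj ((measurableSet_Ioc).diff hVmeas) hintV hintD
  have hb1 : ∫ θ in V, g θ ≤ c' * (volume V).toReal := by
    have := setIntegral_mono_on hintV (integrableOn_const ?_) hVmeas
      (fun θ hθ => le_of_lt hθ.1)
    · simpa [Measure.restrict_apply, mul_comm, Measure.real] using this
    · exact (lt_of_le_of_lt (measure_mono hVsub) (by rw [Real.volume_Ioc]; exact ENNReal.ofReal_lt_top)).ne
  have hb2 : ∫ θ in Ioc 0 (2*π) \ V, g θ ≤ m * (volume (Ioc 0 (2*π) \ V)).toReal := by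
    have := setIntegral_mono_on hintD (integrableOn_const ?_) ((measurableSet_Ioc).diff hVmeas)
      (fun θ _ => hle θ)
    · simpa [Measure.restrict_apply, mul_comm, Measure.real] using this
    · exact (lt_of_le_of_lt (measure_mono diff_subset) (by rw [Real.volume_Ioc]; exact ENNReal.ofReal_lt_top)).ne
  have hvol : (volume V).toReal + (volume (Ioc 0 (2*π) \ V)).toReal = 2*π := by
    have hfin1 : volume V ≠ ⊤ :=
      (lt_of_le_of_lt (measure_mono hVsub) (by rw [Real.volume_Ioc]; exact ENNReal.ofReal_lt_top)).ne
    have hfin2 : volume (Ioc 0 (2*π) \ V) ≠ ⊤ :=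
      (lt_of_le_of_lt (measure_mono diff_subset) (by rw [Real.volume_Ioc]; exact ENNReal.ofReal_lt_top)).ne
    have heq : volume (Ioc 0 (2*π)) = volume V + volume (Ioc 0 (2*π) \ V) := by
      conv_lhs => rw [hsplit]
      exact measure_union hdisj ((measurableSet_Ioc).diff hVmeas)
    have h2 : (volume (Ioc 0 (2*π))).toReal = 2*π := by simp [Real.volume_Ioc]; linarith
    rw [heq, ENNReal.toReal_add hfin1 hfin2] at h2
    exact h2
  calc ∫ θ in (0:ℝ)..(2*π), g θ ≤ c' * (volume V).toReal + m * (volume (Ioc 0 (2*π) \ V)).toReal := by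
        rw [hI]; exact add_le_add hb1 hb2
    _ < m * (volume V).toReal + m * (volume (Ioc 0 (2*π) \ V)).toReal := by
        have := mul_lt_mul_of_pos_right hc'm hVvol
        linarith
    _ = 2*π*m := by rw [← mul_add, hvol]; ring


lemma log_mean {c w₀ : ℂ} {r : ℝ} (hr : 0 < r) (hball : closedBall c r ⊆ {w₀}ᶜ) :
    Real.log (‖c - w₀‖) =
      (2*π)⁻¹ * ∫ θ in (0:ℝ)..(2*π), Real.log (‖circleMap c r θ - w₀‖) := by
  have h2π : (0:ℝ) < 2*π := by positivity
  have hcw : r < ‖c - w₀‖ := by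
    by_contra h
    push_neg at h
    exact hball (by simpa [Complex.dist_eq, dist_comm] using h : w₀ ∈ closedBall c r) rfl
  have hcw0 : c - w₀ ≠ 0 := by
    intro h; rw [h] at hcw; simp at hcw; linarith
  set f : ℂ → ℂ := fun z => Complex.log ((z - w₀)/(c - w₀)) with hf
  have hslit : ∀ z ∈ closedBall c r, (z - w₀)/(c - w₀) ∈ slitPlane := by
    intro z hz
    have : ‖(z - w₀)/(c - w₀) - 1‖ < 1 := by
      have heq : (z - w₀)/(c - w₀) - 1 = (z - c)/(c - w₀) := by
        rw [div_sub_one hcw0]; congr 1; ring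
      rw [heq, norm_div]
      rw [div_lt_one (norm_pos_iff.2 hcw0)]
      calc ‖z - c‖ = dist z c := (dist_eq_norm z c).symm
        _ ≤ r := mem_closedBall.mp hz
        _ < ‖c - w₀‖ := by exact hcw
    have := mem_slitPlane_of_norm_lt_one this
    simpa using this
  have hdiff : ∀ z ∈ closedBall c r, DifferentiableAt ℂ f z := by
    intro z hz
    exact (differentiableAt_log (hslit z hz)).comp z (f := fun z => (z - w₀)/(c - w₀))
      (by fun_prop)
  have hcont : ContinuousOn f (closedBall c r) := fun z hz => (hdiff z hz).continuousAt.continuousWithinAt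
  have hC : (∮ z in C(c, r), (z - c)⁻¹ • f z) = (2 * π * Complex.I) • f c :=
    circleIntegral_sub_center_inv_smul_of_differentiable_on_off_countable hr Set.countable_empty
      hcont (fun z hz => hdiff z (ball_subset_closedBall hz.1))
  have hfc : f c = 0 := by simp [hf, div_self hcw0]
  rw [hfc, smul_zero] at hC
  -- unfold circle integral
  have hFcont : Continuous fun θ => f (circleMap c r θ) := by
    apply ContinuousOn.comp_continuous hcont (continuous_circleMap c r)
    intro θ; exact circleMap_mem_closedBall c hr.le θ
  have hunfold : (∮ z in C(c, r), (z - c)⁻¹ • f z)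
      = Complex.I * ∫ θ in (0:ℝ)..(2*π), f (circleMap c r θ) := by
    rw [circleIntegral]
    rw [← intervalIntegral.integral_const_mul]
    apply intervalIntegral.integral_congr
    intro θ _
    have hne : circleMap 0 r θ ≠ 0 := circleMap_ne_center hr.ne'
    simp only [deriv_circleMap, circleMap_sub_center, smul_eq_mul]
    field_simp
  rw [hunfold] at hC
  have hintF : ∫ θ in (0:ℝ)..(2*π), f (circleMap c r θ) = 0 := by
    exact (mul_eq_zero.mp hC).resolve_left Complex.I_ne_zero
  -- take real parts
  have hre : ∫ θ in (0:ℝ)..(2*π), (f (circleMap c r θ)).re = 0 := by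
    have := Complex.reCLM.intervalIntegral_comp_comm
      (hFcont.intervalIntegrable (μ := volume) 0 (2*π))
    simp only [Complex.reCLM_apply] at this
    rw [this, hintF]
    simp
  have hrepr : ∀ θ : ℝ, (f (circleMap c r θ)).re =
      Real.log (‖circleMap c r θ - w₀‖) - Real.log (‖c - w₀‖) := by
    intro θ
    have hz := circleMap_mem_closedBall c hr.le θ
    have hzne : circleMap c r θ - w₀ ≠ 0 := sub_ne_zero.2 (hball hz)
    simp only [hf, Complex.log_re, norm_div]
    rw [Real.log_div (norm_ne_zero_iff.mpr hzne) (norm_ne_zero_iff.mpr hcw0)]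
  rw [intervalIntegral.integral_congr (fun θ _ => hrepr θ)] at hre
  rw [intervalIntegral.integral_sub] at hre
  · rw [intervalIntegral.integral_const] at hre
    have hint2 : ∫ θ in (0:ℝ)..(2*π), Real.log (‖circleMap c r θ - w₀‖)
        = 2*π * Real.log (‖c - w₀‖) := by
      simp only [smul_eq_mul, sub_zero] at hre
      linarith [hre]
    rw [hint2]
    field_simp
  · apply Continuous.intervalIntegrable
    rw [continuous_iff_continuousAt]
    intro θ
    have hzne : circleMap c r θ - w₀ ≠ 0 :=
      sub_ne_zero.2 (hball (circleMap_mem_closedBall c hr.le θ))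
    have h1 : ContinuousAt (fun θ : ℝ => ‖circleMap c r θ - w₀‖) θ :=
      (continuous_norm.comp ((continuous_circleMap c r).sub continuous_const)).continuousAt
    exact h1.log (norm_ne_zero_iff.mpr hzne)
  · exact intervalIntegrable_const


lemma exists_theta {x y : ℂ} {ρ : ℝ} (hρ : 0 < ρ) (h : ‖y - x‖ = ρ) :
    ∃ θ₀ ∈ Set.Icc (0:ℝ) (2*π), circleMap x ρ θ₀ = y := by
  set ζ : ℂ := (y - x) / (ρ : ℂ) with hζ
  have hρℂ : (ρ : ℂ) ≠ 0 := by exact_mod_cast hρ.ne'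
  have hζabs : ‖ζ‖ = 1 := by
    rw [hζ, norm_div, h, Complex.norm_real, Real.norm_eq_abs, abs_of_pos hρ, div_self hρ.ne']
  have hexp : Complex.exp (ζ.arg * Complex.I) = ζ := by
    have := Complex.norm_mul_exp_arg_mul_I ζ
    rw [hζabs] at this
    simpa using this
  have harg1 := Complex.neg_pi_lt_arg ζ
  have harg2 := Complex.arg_le_pi ζ
  by_cases hneg : ζ.arg < 0
  · refine ⟨ζ.arg + 2*π, ⟨by linarith [Real.pi_pos], by linarith [Real.pi_pos]⟩, ?_⟩
    have : circleMap x ρ (ζ.arg + 2*π) = x + ρ * Complex.exp (ζ.arg * Complex.I) := by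
      simp only [circleMap]
      congr 2
      rw [show ((ζ.arg + 2*π : ℝ) : ℂ) * Complex.I = ζ.arg * Complex.I + 2*π*Complex.I by push_cast; ring]
      rw [Complex.exp_add, Complex.exp_two_pi_mul_I, mul_one]
    rw [this, hexp, hζ]
    field_simp
    ring
  · push_neg at hneg
    refine ⟨ζ.arg, ⟨hneg, by linarith [Real.pi_pos]⟩, ?_⟩
    have : circleMap x ρ ζ.arg = x + ρ * Complex.exp (ζ.arg * Complex.I) := rfl
    rw [this, hexp, hζ]
    field_simp
    ring


lemma annulus_bound {u : ℂ → ℝ} {w₀ : ℂ} (hsub : SubharmonicOn u {w₀}ᶜ) {M : ℝ}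
    (hM : ∀ w, w ≠ w₀ → |u w| ≤ M) {r R : ℝ} (hr : 0 < r) (hrR : r < R) (a b : ℝ)
    (hbound : ∀ w : ℂ, ‖w - w₀‖ = r ∨ ‖w - w₀‖ = R →
      u w ≤ a + b * Real.log (‖w - w₀‖)) :
    ∀ w : ℂ, r ≤ ‖w - w₀‖ → ‖w - w₀‖ ≤ R →
      u w ≤ a + b * Real.log (‖w - w₀‖) := by
  have h2π : (0:ℝ) < 2*π := by positivity
  set h : ℂ → ℝ := fun w => a + b * Real.log (‖w - w₀‖) with hh
  set v : ℂ → ℝ := fun w => u w + -(h w) with hv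
  set A : Set ℂ := {w | r ≤ ‖w - w₀‖ ∧ ‖w - w₀‖ ≤ R} with hA
  have habs : Continuous fun w : ℂ => ‖w - w₀‖ :=
    continuous_norm.comp (continuous_id.sub continuous_const)
  have hAclosed : IsClosed A := by
    have : A = (fun w : ℂ => ‖w - w₀‖) ⁻¹' (Icc r R) := rfl
    rw [this]; exact isClosed_Icc.preimage habs
  have hAcomp : IsCompact A := by
    apply (isCompact_closedBall w₀ R).of_isClosed_subset hAclosed
    intro w hw
    rw [mem_closedBall, Complex.dist_eq]
    exact hw.2
  have hAS : A ⊆ {w₀}ᶜ := by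
    intro w hw
    intro hweq
    rw [Set.mem_singleton_iff] at hweq
    subst hweq
    have h1 := hw.1
    rw [sub_self, norm_zero] at h1
    linarith
  have hzero : ∀ w ∈ ({w₀}ᶜ : Set ℂ), ‖w - w₀‖ ≠ 0 := by
    intro w hw
    simpa [sub_eq_zero] using hw
  have hhcont : ∀ x ∈ ({w₀}ᶜ : Set ℂ), ContinuousAt h x := by
    intro x hx
    apply continuousAt_const.add
    exact (habs.continuousAt.log (hzero x hx)).const_smul b |>.congr (by
      apply Filter.Eventually.of_forall; intro z; simp [smul_eq_mul])
  have hvusc : ∀ x ∈ A, UpperSemicontinuousAt v x := by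
    intro x hx
    exact UpperSemicontinuousAt.add (usc_at_of_on isOpen_compl_singleton hsub.1 (hAS hx))
      (((hhcont x (hAS hx)).neg).upperSemicontinuousAt)
  -- bound on v over A
  have hlogbnd : ∀ w ∈ A, |Real.log (‖w - w₀‖)| ≤ |Real.log r| + |Real.log R| := by
    intro w hw
    have h1 : Real.log r ≤ Real.log (‖w - w₀‖) := Real.log_le_log hr hw.1
    have h2 : Real.log (‖w - w₀‖) ≤ Real.log R :=
      Real.log_le_log (lt_of_lt_of_le hr hw.1) hw.2
    rw [abs_le]
    constructor
    · have := neg_abs_le (Real.log r); linarith [abs_nonneg (Real.log R)]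
    · have := le_abs_self (Real.log R); linarith [abs_nonneg (Real.log r)]
  have hvbnd : ∀ x ∈ A, v x ≤ M + |a| + |b| * (|Real.log r| + |Real.log R|) := by
    intro x hx
    have h1 : u x ≤ M := (abs_le.mp (hM x (hAS hx))).2
    have h2 : -(h x) ≤ |a| + |b| * (|Real.log r| + |Real.log R|) := by
      have h3 : |b * Real.log (‖x - w₀‖)| ≤ |b| * (|Real.log r| + |Real.log R|) := by
        rw [abs_mul]
        exact mul_le_mul_of_nonneg_left (hlogbnd x hx) (abs_nonneg b)
      have h4 := neg_abs_le (b * Real.log (‖x - w₀‖))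
      have h5 := neg_abs_le a
      simp only [hh, neg_add]
      nlinarith [abs_nonneg a]
    simp only [hv]; linarith
  -- max of v on A
  have hAne : A.Nonempty := ⟨w₀ + (r : ℂ), by
    constructor <;> simp [Complex.norm_real, Real.norm_eq_abs, abs_of_pos hr] <;> linarith⟩
  obtain ⟨x₁, hx₁A, hx₁max⟩ := usc_max hAcomp hAne hvusc _ hvbnd
  set mv := v x₁ with hmv
  by_cases hmvpos : mv ≤ 0
  · intro w hw1 hw2
    have := hx₁max w ⟨hw1, hw2⟩
    simp only [hv] at this
    have : u w - h w ≤ mv := by linarith [this]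
    simp only [hh] at this ⊢
    linarith
  push_neg at hmvpos
  exfalso
  -- boundary values nonpositive
  have hbdry : ∀ w ∈ A, ‖w - w₀‖ = r ∨ ‖w - w₀‖ = R → v w ≤ 0 := by
    intro w _ hw
    have := hbound w hw
    simp only [hv, hh] at *
    linarith
  -- maximizer set
  set A₀ : Set ℂ := {x ∈ A | v x = mv} with hA₀
  have hA₀closed : IsClosed A₀ := by
    have hopen : IsOpen {x : ℂ | x ≠ w₀ ∧ v x < mv} := by
      rw [isOpen_iff_mem_nhds]
      rintro x ⟨hx1, hx2⟩
      have h1 : ∀ᶠ z in nhds x, v z < mv := by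
        have husc : UpperSemicontinuousAt v x :=
          UpperSemicontinuousAt.add (usc_at_of_on isOpen_compl_singleton hsub.1 hx1)
            (((hhcont x hx1).neg).upperSemicontinuousAt)
        exact husc mv hx2
      have h2 : ∀ᶠ z in nhds x, z ≠ w₀ :=
        isOpen_compl_singleton.mem_nhds (by exact hx1)
      exact (h2.and h1)
    have : A₀ = A \ {x : ℂ | x ≠ w₀ ∧ v x < mv} := by
      ext x
      simp only [hA₀, Set.mem_setOf_eq, Set.mem_diff, Set.mem_sep_iff]
      constructor
      · rintro ⟨hxA, hxv⟩
        exact ⟨hxA, fun hc => by rw [hxv] at hc; exact lt_irrefl _ hc.2⟩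
      · rintro ⟨hxA, hxn⟩
        refine ⟨hxA, ?_⟩
        have h1 : x ≠ w₀ := hAS hxA
        have h2 : ¬ v x < mv := fun hc => hxn ⟨h1, hc⟩
        have h3 : v x ≤ mv := hx₁max x hxA
        exact le_antisymm h3 (not_lt.mp h2)
    rw [this]
    exact hAclosed.sdiff hopen
  have hA₀comp : IsCompact A₀ := hAcomp.of_isClosed_subset hA₀closed (Set.sep_subset _ _)
  have hA₀ne : A₀.Nonempty := ⟨x₁, hx₁A, rfl⟩
  obtain ⟨x₀, hx₀A₀, hx₀max⟩ := hA₀comp.exists_isMaxOn hA₀ne habs.continuousOn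
  obtain ⟨hx₀A, hx₀v⟩ := hx₀A₀
  set s := ‖x₀ - w₀‖ with hs
  have hs0 : 0 < s := lt_of_lt_of_le hr hx₀A.1
  -- x₀ is strictly inside the annulus
  have hsr : r < s := by
    rcases lt_or_eq_of_le hx₀A.1 with h | h
    · exact h
    · exfalso
      have := hbdry x₀ hx₀A (Or.inl h.symm)
      rw [hx₀v] at this; linarith
  have hsR : s < R := by
    rcases lt_or_eq_of_le hx₀A.2 with h | h
    · exact h
    · exfalso
      have := hbdry x₀ hx₀A (Or.inr h)
      rw [hx₀v] at this; linarith
  set ρ := min (s - r) (R - s) with hρ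
  have hρpos : 0 < ρ := lt_min (by linarith) (by linarith)
  have hρ1 : ρ ≤ s - r := min_le_left _ _
  have hρ2 : ρ ≤ R - s := min_le_right _ _
  have hballA : closedBall x₀ ρ ⊆ A := by
    intro z hz
    rw [mem_closedBall, Complex.dist_eq] at hz
    have h1 : ‖z - w₀‖ ≤ ‖z - x₀‖ + ‖x₀ - w₀‖ := by
      have := norm_add_le (z - x₀) (x₀ - w₀)
      simpa using this
    have h2 : s - ‖z - x₀‖ ≤ ‖z - w₀‖ := by
      have := norm_add_le (x₀ - z) (z - w₀)
      simp only [hs]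
      have heq : x₀ - z + (z - w₀) = x₀ - w₀ := by ring
      rw [heq] at this
      rw [norm_sub_rev x₀ z] at this
      linarith
    constructor
    · linarith
    · linarith
  have hballS : closedBall x₀ ρ ⊆ {w₀}ᶜ := hballA.trans hAS
  -- the point y on the circle farther from w₀
  set y : ℂ := x₀ + (((s + ρ)/s - 1 : ℝ) : ℂ) * (x₀ - w₀) with hy
  have hyw : y - w₀ = (((s + ρ)/s : ℝ) : ℂ) * (x₀ - w₀) := by
    rw [hy]
    push_cast
    have : (s : ℂ) ≠ 0 := by exact_mod_cast hs0.ne'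
    field_simp
    ring
  have hyabs : ‖y - w₀‖ = s + ρ := by
    rw [hyw, norm_mul, Complex.norm_real, Real.norm_eq_abs, abs_of_pos (by positivity), ← hs]
    field_simp
  have hyx₀ : ‖y - x₀‖ = ρ := by
    have : y - x₀ = (((s + ρ)/s - 1 : ℝ) : ℂ) * (x₀ - w₀) := by rw [hy]; ring
    rw [this, norm_mul, Complex.norm_real, Real.norm_eq_abs, ← hs]
    have hpos : (s + ρ)/s - 1 = ρ/s := by field_simp; ring
    rw [hpos, abs_of_pos (by positivity)]
    field_simp
  have hyA : y ∈ A := by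
    constructor
    · rw [hyabs]; linarith
    · rw [hyabs]; linarith
  have hyv : v y < mv := by
    rcases lt_or_eq_of_le (hx₁max y hyA) with h | h
    · exact h
    · exfalso
      have hyA₀ : y ∈ A₀ := ⟨hyA, h⟩
      have := hx₀max hyA₀
      simp only [Set.mem_setOf_eq] at this
      rw [hyabs, ← hs] at this
      simp at this
      linarith
  -- θ₀ with circleMap x₀ ρ θ₀ = y
  obtain ⟨θ₀, hθ₀mem, hθ₀eq⟩ : ∃ θ₀ ∈ Set.Icc (0:ℝ) (2*π), circleMap x₀ ρ θ₀ = y := by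
    set ζ : ℂ := (y - x₀) / (ρ : ℂ) with hζ
    have hρℂ : (ρ : ℂ) ≠ 0 := by exact_mod_cast hρpos.ne'
    have hζabs : ‖ζ‖ = 1 := by
      rw [hζ, norm_div, hyx₀, Complex.norm_real, Real.norm_eq_abs, abs_of_pos hρpos, div_self hρpos.ne']
    have hζne : ζ ≠ 0 := by
      intro hc; rw [hc] at hζabs; simp at hζabs
    have hexp : Complex.exp (ζ.arg * Complex.I) = ζ := by
      have := Complex.norm_mul_exp_arg_mul_I ζ
      rw [hζabs] at this
      simpa using this
    have harg1 := Complex.neg_pi_lt_arg ζ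
    have harg2 := Complex.arg_le_pi ζ
    by_cases hneg : ζ.arg < 0
    · refine ⟨ζ.arg + 2*π, ⟨by linarith [Real.pi_pos], by linarith [Real.pi_pos]⟩, ?_⟩
      have : circleMap x₀ ρ (ζ.arg + 2*π) = x₀ + ρ * Complex.exp (ζ.arg * Complex.I) := by
        simp only [circleMap]
        congr 1
        congr 1
        rw [show ((ζ.arg + 2*π : ℝ) : ℂ) * Complex.I = ζ.arg * Complex.I + 2*π*Complex.I by push_cast; ring]
        rw [Complex.exp_add, Complex.exp_two_pi_mul_I, mul_one]
      rw [this, hexp, hζ]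
      field_simp
      ring
    · push_neg at hneg
      refine ⟨ζ.arg, ⟨hneg, by linarith [Real.pi_pos]⟩, ?_⟩
      have : circleMap x₀ ρ ζ.arg = x₀ + ρ * Complex.exp (ζ.arg * Complex.I) := rfl
      rw [this, hexp, hζ]
      field_simp
      ring
  -- sub-mean inequality for v at x₀
  have hintu : IntervalIntegrable (fun θ => u (circleMap x₀ ρ θ)) volume 0 (2*π) :=
    int_circle hsub.1 hρpos.le hballS hM
  have hloge : Real.log (‖x₀ - w₀‖) =
      (2*π)⁻¹ * ∫ θ in (0:ℝ)..(2*π), Real.log (‖circleMap x₀ ρ θ - w₀‖) :=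
    log_mean hρpos hballS
  have hcontlog : Continuous fun θ => Real.log (‖circleMap x₀ ρ θ - w₀‖) := by
    rw [continuous_iff_continuousAt]
    intro θ
    have hzne : circleMap x₀ ρ θ - w₀ ≠ 0 :=
      sub_ne_zero.2 (hballS (circleMap_mem_closedBall x₀ hρpos.le θ))
    exact ((continuous_norm.comp ((continuous_circleMap x₀ ρ).sub continuous_const)).continuousAt).log
      (norm_ne_zero_iff.mpr hzne)
  have hinth : IntervalIntegrable (fun θ => h (circleMap x₀ ρ θ)) volume 0 (2*π) := by
    apply Continuous.intervalIntegrable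
    exact continuous_const.add (continuous_const.mul hcontlog)
  have hinth2 : ∫ θ in (0:ℝ)..(2*π), h (circleMap x₀ ρ θ) = 2*π * h x₀ := by
    simp only [hh]
    rw [intervalIntegral.integral_add (by apply Continuous.intervalIntegrable; exact continuous_const)
      (by apply Continuous.intervalIntegrable; exact continuous_const.mul hcontlog)]
    rw [intervalIntegral.integral_const, intervalIntegral.integral_const_mul]
    have : ∫ θ in (0:ℝ)..(2*π), Real.log (‖circleMap x₀ ρ θ - w₀‖)
        = 2*π * Real.log (‖x₀ - w₀‖) := by
      rw [hloge]
      field_simp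
    rw [this]
    simp only [smul_eq_mul, sub_zero]
    ring
  have hsubmean : v x₀ ≤ (2*π)⁻¹ * ∫ θ in (0:ℝ)..(2*π), v (circleMap x₀ ρ θ) := by
    have h1 := hsub.2 x₀ ρ hρpos hballS
    have h2 : ∫ θ in (0:ℝ)..(2*π), v (circleMap x₀ ρ θ)
        = (∫ θ in (0:ℝ)..(2*π), u (circleMap x₀ ρ θ)) - ∫ θ in (0:ℝ)..(2*π), h (circleMap x₀ ρ θ) := by
      simp only [hv]
      rw [← intervalIntegral.integral_sub hintu hinth]
      apply intervalIntegral.integral_congr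
      intro θ _
      ring
    rw [h2, hinth2]
    simp only [hv]
    rw [mul_sub]
    have h3 : (2*π)⁻¹ * (2*π * h x₀) = h x₀ := by field_simp
    rw [h3]
    linarith
  -- strict inequality
  have hgusc : ∀ θ, UpperSemicontinuousAt (fun θ => v (circleMap x₀ ρ θ)) θ := by
    intro θ
    apply UpperSemicontinuousAt.add (usc_circle hsub.1 hρpos.le hballS θ)
    have : Continuous fun θ => -(h (circleMap x₀ ρ θ)) :=
      (continuous_const.add (continuous_const.mul hcontlog)).neg
    exact this.continuousAt.upperSemicontinuousAt
  have hgint : IntervalIntegrable (fun θ => v (circleMap x₀ ρ θ)) volume 0 (2*π) := by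
    have : (fun θ => v (circleMap x₀ ρ θ))
        = fun θ => u (circleMap x₀ ρ θ) + -(h (circleMap x₀ ρ θ)) := rfl
    rw [this]
    exact hintu.add (hinth.neg)
  have hgle : ∀ θ, v (circleMap x₀ ρ θ) ≤ mv := by
    intro θ
    exact hx₁max _ (hballA (circleMap_mem_closedBall x₀ hρpos.le θ))
  have hglt : v (circleMap x₀ ρ θ₀) < mv := by rw [hθ₀eq]; exact hyv
  have hstrict := strict_mean hgusc hgint hgle hθ₀mem hglt
  have hfinal : v x₀ < mv := by
    calc v x₀ ≤ (2*π)⁻¹ * ∫ θ in (0:ℝ)..(2*π), v (circleMap x₀ ρ θ) := hsubmean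
      _ < (2*π)⁻¹ * (2*π*mv) := by
          apply mul_lt_mul_of_pos_left hstrict
          positivity
      _ = mv := by field_simp
  rw [hx₀v] at hfinal
  exact lt_irrefl _ hfinal


section M
variable {u : ℂ → ℝ} {w₀ : ℂ} (hsub : SubharmonicOn u {w₀}ᶜ) {M : ℝ}
  (hM : ∀ w, w ≠ w₀ → |u w| ≤ M)

noncomputable def mfun (u : ℂ → ℝ) (w₀ : ℂ) (ρ : ℝ) : ℝ :=
  sSup (u '' {w | ‖w - w₀‖ = ρ})

lemma sphere_pt {ρ : ℝ} (hρ : 0 < ρ) : ‖(w₀ + (ρ:ℂ)) - w₀‖ = ρ := by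
  simp [Complex.norm_real, Real.norm_eq_abs, abs_of_pos hρ]

lemma sphere_ne_w₀ {ρ : ℝ} (hρ : 0 < ρ) {w : ℂ} (hw : ‖w - w₀‖ = ρ) : w ≠ w₀ := by
  intro h; rw [h, sub_self, norm_zero] at hw; linarith

include hM in
lemma m_bddAbove {ρ : ℝ} (hρ : 0 < ρ) : BddAbove (u '' {w | ‖w - w₀‖ = ρ}) := by
  refine ⟨M, ?_⟩
  rintro - ⟨w, hw, rfl⟩
  exact (abs_le.mp (hM w (sphere_ne_w₀ hρ hw))).2

include hM in
lemma m_le {ρ : ℝ} (hρ : 0 < ρ) {w : ℂ} (hw : ‖w - w₀‖ = ρ) :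
    u w ≤ mfun u w₀ ρ :=
  le_csSup (m_bddAbove hM hρ) ⟨w, hw, rfl⟩

include hM in
lemma m_bound {ρ : ℝ} (hρ : 0 < ρ) : |mfun u w₀ ρ| ≤ M := by
  rw [abs_le]
  constructor
  · have h1 := m_le hM hρ (sphere_pt (w₀ := w₀) hρ)
    have h2 := (abs_le.mp (hM _ (sphere_ne_w₀ hρ (sphere_pt (w₀ := w₀) hρ)))).1
    linarith
  · apply csSup_le (⟨u (w₀ + (ρ:ℂ)), ⟨_, sphere_pt hρ, rfl⟩⟩ : (u '' _).Nonempty)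
    rintro - ⟨w, hw, rfl⟩
    exact (abs_le.mp (hM w (sphere_ne_w₀ hρ hw))).2

include hsub hM in
lemma m_attained {ρ : ℝ} (hρ : 0 < ρ) :
    ∃ w : ℂ, ‖w - w₀‖ = ρ ∧ u w = mfun u w₀ ρ := by
  set K := {w : ℂ | ‖w - w₀‖ = ρ} with hK
  have habs : Continuous fun w : ℂ => ‖w - w₀‖ :=
    continuous_norm.comp (continuous_id.sub continuous_const)
  have hKclosed : IsClosed K := by
    have : K = (fun w : ℂ => ‖w - w₀‖) ⁻¹' {ρ} := rfl
    rw [this]; exact isClosed_singleton.preimage habs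
  have hKcomp : IsCompact K := by
    apply (isCompact_closedBall w₀ ρ).of_isClosed_subset hKclosed
    intro w hw
    rw [mem_closedBall, Complex.dist_eq, hw]
  have hKne : K.Nonempty := ⟨w₀ + (ρ:ℂ), sphere_pt hρ⟩
  obtain ⟨x, hxK, hxmax⟩ := usc_max hKcomp hKne
    (fun x hx => usc_at_of_on isOpen_compl_singleton hsub.1 (sphere_ne_w₀ hρ hx)) M
    (fun x hx => (abs_le.mp (hM x (sphere_ne_w₀ hρ hx))).2)
  refine ⟨x, hxK, le_antisymm (m_le hM hρ hxK) ?_⟩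
  apply csSup_le (hKne.image u)
  rintro - ⟨w, hw, rfl⟩
  exact hxmax w hw

include hsub hM in
lemma m_interp {r ρ R : ℝ} (hr : 0 < r) (hrρ : r < ρ) (hρR : ρ < R) :
    mfun u w₀ ρ ≤ mfun u w₀ r +
      (mfun u w₀ R - mfun u w₀ r) * (Real.log ρ - Real.log r) / (Real.log R - Real.log r) := by
  have hρ0 : 0 < ρ := lt_trans hr hrρ
  have hR0 : 0 < R := lt_trans hρ0 hρR
  have hlogrR : Real.log r < Real.log R := Real.log_lt_log hr (lt_trans hrρ hρR)
  set b := (mfun u w₀ R - mfun u w₀ r) / (Real.log R - Real.log r) with hb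
  set a := mfun u w₀ r - b * Real.log r with ha
  have key := annulus_bound hsub hM hr (lt_trans hrρ hρR) a b ?_
  · apply csSup_le (⟨u (w₀ + (ρ:ℂ)), ⟨_, sphere_pt hρ0, rfl⟩⟩ : (u '' _).Nonempty)
    rintro - ⟨w, hw, rfl⟩
    have := key w (by rw [hw]; exact hrρ.le) (by rw [hw]; exact hρR.le)
    rw [hw] at this
    calc u w ≤ a + b * Real.log ρ := this
      _ = mfun u w₀ r + (mfun u w₀ R - mfun u w₀ r) * (Real.log ρ - Real.log r) / (Real.log R - Real.log r) := by
          rw [ha, hb]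
          have hne : Real.log R - Real.log r ≠ 0 := sub_ne_zero.2 hlogrR.ne'
          field_simp
          ring
  · intro w hw
    rcases hw with hw | hw
    · rw [hw]
      have : a + b * Real.log r = mfun u w₀ r := by rw [ha]; ring
      rw [this]
      exact m_le hM hr hw
    · rw [hw]
      have : a + b * Real.log R = mfun u w₀ R := by
        rw [ha, hb]
        have hne : Real.log R - Real.log r ≠ 0 := sub_ne_zero.2 hlogrR.ne'
        field_simp
        ring
      rw [this]
      exact m_le hM hR0 hw

include hsub hM in
lemma m_decr (hM0 : 0 ≤ M) {r ρ : ℝ} (hr : 0 < r) (hrρ : r < ρ) :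
    mfun u w₀ ρ ≤ mfun u w₀ r := by
  apply le_of_forall_pos_le_add
  intro ε hε
  set L := Real.log ρ - Real.log r with hL
  have hL0 : 0 < L := sub_pos.2 (Real.log_lt_log hr hrρ)
  set t := L * (2*M + 1) / ε with ht
  have ht0 : 0 < t := by positivity
  set R := max (ρ+1) (r * Real.exp t) with hR
  have hρR : ρ < R := lt_of_lt_of_le (by linarith) (le_max_left _ _)
  have hlogR : Real.log r + t ≤ Real.log R := by
    have h1 : r * Real.exp t ≤ R := le_max_right _ _
    have h2 : Real.log (r * Real.exp t) ≤ Real.log R :=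
      Real.log_le_log (by positivity) h1
    rwa [Real.log_mul hr.ne' (Real.exp_ne_zero t), Real.log_exp] at h2
  set D := Real.log R - Real.log r with hD
  have hD0 : t ≤ D := by simp only [hD]; linarith
  have hDpos : 0 < D := lt_of_lt_of_le ht0 hD0
  have hint := m_interp hsub hM hr hrρ hρR
  rw [← hL, ← hD] at hint
  have hdiff : mfun u w₀ R - mfun u w₀ r ≤ 2*M := by
    have h1 := (abs_le.mp (m_bound hM (lt_trans hr (lt_trans hrρ hρR)))).2
    have h2 := (abs_le.mp (m_bound hM hr)).1
    linarith
  by_cases hsign : mfun u w₀ R - mfun u w₀ r ≤ 0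
  · have : (mfun u w₀ R - mfun u w₀ r) * L / D ≤ 0 := by
      apply div_nonpos_of_nonpos_of_nonneg _ hDpos.le
      exact mul_nonpos_of_nonpos_of_nonneg hsign hL0.le
    linarith
  · push_neg at hsign
    have hq : L / D ≤ ε / (2*M+1) := by
      have h1 : L / D ≤ L / t := by
        apply div_le_div_of_nonneg_left hL0.le ht0 hD0
      have h2 : L / t = ε / (2*M+1) := by
        rw [ht]
        field_simp
      linarith
    have hfin : (mfun u w₀ R - mfun u w₀ r) * L / D ≤ ε := by
      rw [mul_div_assoc]
      calc (mfun u w₀ R - mfun u w₀ r) * (L/D) ≤ (2*M+1) * (L/D) := by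
            apply mul_le_mul_of_nonneg_right (by linarith) (by positivity)
        _ ≤ (2*M+1) * (ε/(2*M+1)) := by
            apply mul_le_mul_of_nonneg_left hq (by linarith)
        _ = ε := by field_simp
    linarith

include hsub hM in
lemma m_incr (hM0 : 0 ≤ M) {ρ R : ℝ} (hρ : 0 < ρ) (hρR : ρ < R) :
    mfun u w₀ ρ ≤ mfun u w₀ R := by
  apply le_of_forall_pos_le_add
  intro ε hε
  set L2 := Real.log R - Real.log ρ with hL2
  have hL20 : 0 < L2 := sub_pos.2 (Real.log_lt_log hρ hρR)
  set t := L2 * (2*M + 1) / ε with ht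
  have ht0 : 0 < t := by positivity
  have hR0 : 0 < R := lt_trans hρ hρR
  set r := min (ρ/2) (R * Real.exp (-t)) with hr
  have hr0 : 0 < r := lt_min (by linarith) (mul_pos hR0 (Real.exp_pos _))
  have hrρ : r < ρ := lt_of_le_of_lt (min_le_left _ _) (by linarith)
  have hlogr : Real.log r ≤ Real.log R - t := by
    have h1 : r ≤ R * Real.exp (-t) := min_le_right _ _
    have h2 := Real.log_le_log hr0 h1
    rwa [Real.log_mul hR0.ne' (Real.exp_ne_zero _), Real.log_exp] at h2
  set D := Real.log R - Real.log r with hD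
  have hD0 : t ≤ D := by simp only [hD]; linarith
  have hDpos : 0 < D := lt_of_lt_of_le ht0 hD0
  have hint := m_interp hsub hM hr0 hrρ hρR
  rw [← hD] at hint
  set L1 := Real.log ρ - Real.log r with hL1
  have hLD : L1 + L2 = D := by simp only [hL1, hL2, hD]; ring
  -- rewrite the interpolation towards R
  have hint2 : mfun u w₀ ρ ≤ mfun u w₀ R + (mfun u w₀ r - mfun u w₀ R) * L2 / D := by
    have heq : mfun u w₀ r + (mfun u w₀ R - mfun u w₀ r) * L1 / D
        = mfun u w₀ R + (mfun u w₀ r - mfun u w₀ R) * L2 / D := by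
      field_simp
      linear_combination (mfun u w₀ R - mfun u w₀ r) * hLD
    linarith [hint, heq.symm.le]
  have hdiff : mfun u w₀ r - mfun u w₀ R ≤ 2*M := by
    have h1 := (abs_le.mp (m_bound hM hr0)).2
    have h2 := (abs_le.mp (m_bound hM (lt_trans hρ hρR))).1
    linarith
  by_cases hsign : mfun u w₀ r - mfun u w₀ R ≤ 0
  · have : (mfun u w₀ r - mfun u w₀ R) * L2 / D ≤ 0 := by
      apply div_nonpos_of_nonpos_of_nonneg _ hDpos.le
      exact mul_nonpos_of_nonpos_of_nonneg hsign hL20.le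
    linarith
  · push_neg at hsign
    have hq : L2 / D ≤ ε / (2*M+1) := by
      have h1 : L2 / D ≤ L2 / t :=
        div_le_div_of_nonneg_left hL20.le ht0 hD0
      have h2 : L2 / t = ε / (2*M+1) := by rw [ht]; field_simp
      linarith
    have hfin : (mfun u w₀ r - mfun u w₀ R) * L2 / D ≤ ε := by
      rw [mul_div_assoc]
      calc (mfun u w₀ r - mfun u w₀ R) * (L2/D) ≤ (2*M+1) * (L2/D) := by
            apply mul_le_mul_of_nonneg_right (by linarith) (by positivity)
        _ ≤ (2*M+1) * (ε/(2*M+1)) := by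
            apply mul_le_mul_of_nonneg_left hq (by linarith)
        _ = ε := by field_simp
    linarith

include hsub hM in
lemma m_const (hM0 : 0 ≤ M) {ρ₁ ρ₂ : ℝ} (h1 : 0 < ρ₁) (h2 : 0 < ρ₂) :
    mfun u w₀ ρ₁ = mfun u w₀ ρ₂ := by
  rcases lt_trichotomy ρ₁ ρ₂ with h | h | h
  · exact le_antisymm (m_incr hsub hM hM0 h1 h) (m_decr hsub hM hM0 h1 h)
  · rw [h]
  · exact le_antisymm (m_decr hsub hM hM0 h2 h) (m_incr hsub hM hM0 h2 h)

end M


theorem stmt4 (u : ℂ → ℝ) (w₀ : ℂ)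
    (hsub : SubharmonicOn u {w₀}ᶜ)
    (hbdd : ∃ M : ℝ, ∀ w, w ≠ w₀ → |u w| ≤ M)
    (hlog : HarmonicOnSet (fun w => Real.log (u w)) {w | w ≠ w₀ ∧ 0 < u w})
    (hnear : ∃ M₁ : ℝ, ∀ᶠ w in nhdsWithin w₀ {w₀}ᶜ, u w ≤ M₁)
    (hinf : ∃ M₂ : ℝ, ∀ᶠ w in Filter.comap (fun z : ℂ => ‖z‖) Filter.atTop, u w ≤ M₂) :
    ∃ c : ℝ, ∀ w, w ≠ w₀ → u w = c := by
  have h2π : (0:ℝ) < 2*π := by positivity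
  obtain ⟨M', hM'⟩ := hbdd
  set M := |M'| with hMdef
  have hM : ∀ w, w ≠ w₀ → |u w| ≤ M := fun w hw => (hM' w hw).trans (le_abs_self M')
  have hM0 : 0 ≤ M := abs_nonneg M'
  set c₀ := mfun u w₀ 1 with hc₀
  have hmρ : ∀ ρ : ℝ, 0 < ρ → mfun u w₀ ρ = c₀ := fun ρ hρ =>
    m_const hsub hM hM0 hρ one_pos
  have habs_pos : ∀ w : ℂ, w ≠ w₀ → 0 < ‖w - w₀‖ := by
    intro w hw
    rw [norm_pos_iff]
    exact sub_ne_zero.2 hw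
  have hle : ∀ w, w ≠ w₀ → u w ≤ c₀ := by
    intro w hw
    have hρ := habs_pos w hw
    have := m_le hM hρ rfl
    rwa [hmρ _ hρ] at this
  -- propagation
  have hprop : ∀ a : ℂ, a ≠ w₀ → u a = c₀ →
      ∀ w ∈ ball a (‖a - w₀‖/2), w ≠ w₀ ∧ u w = c₀ := by
    intro a ha hua w hw
    have haw := habs_pos a ha
    rw [mem_ball, Complex.dist_eq] at hw
    have htri : ‖a - w₀‖ - ‖w - a‖ ≤ ‖w - w₀‖ := by
      have := norm_add_le (a - w) (w - w₀)
      have heq : a - w + (w - w₀) = a - w₀ := by ring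
      rw [heq] at this
      rw [norm_sub_rev a w] at this
      linarith
    have hwne : w ≠ w₀ := by
      have : 0 < ‖w - w₀‖ := by linarith
      rw [norm_pos_iff] at this
      exact sub_ne_zero.mp this
    refine ⟨hwne, ?_⟩
    by_cases hwa : w = a
    · rw [hwa]; exact hua
    have hρw : 0 < ‖w - a‖ := by
      rw [norm_pos_iff]; exact sub_ne_zero.2 hwa
    set ρw := ‖w - a‖ with hρwdef
    have hball : closedBall a ρw ⊆ ({w₀}ᶜ : Set ℂ) := by
      intro z hz
      rw [mem_closedBall, Complex.dist_eq] at hz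
      have htri2 : ‖a - w₀‖ - ‖z - a‖ ≤ ‖z - w₀‖ := by
        have := norm_add_le (a - z) (z - w₀)
        have heq : a - z + (z - w₀) = a - w₀ := by ring
        rw [heq] at this
        rw [norm_sub_rev a z] at this
        linarith
      have : 0 < ‖z - w₀‖ := by linarith
      rw [norm_pos_iff] at this
      exact sub_ne_zero.mp this
    by_contra hne
    have hlt : u w < c₀ := lt_of_le_of_ne (hle w hwne) hne
    obtain ⟨θ₀, hθ₀mem, hθ₀eq⟩ := exists_theta hρw rfl
    have husc := usc_circle hsub.1 hρw.le hball
    have hint := int_circle hsub.1 hρw.le hball hM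
    have hgle : ∀ θ, u (circleMap a ρw θ) ≤ c₀ := by
      intro θ
      exact hle _ (hball (circleMap_mem_closedBall a hρw.le θ))
    have hglt : u (circleMap a ρw θ₀) < c₀ := by rw [hθ₀eq]; exact hlt
    have hstrict := strict_mean husc hint hgle hθ₀mem hglt
    have hmean := hsub.2 a ρw hρw hball
    have : u a < c₀ := by
      calc u a ≤ (2*π)⁻¹ * ∫ θ in (0:ℝ)..(2*π), u (circleMap a ρw θ) := hmean
        _ < (2*π)⁻¹ * (2*π*c₀) := by
            apply mul_lt_mul_of_pos_left hstrict (by positivity)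
        _ = c₀ := by field_simp
    rw [hua] at this
    exact lt_irrefl _ this
  -- open sets
  set E : Set ℂ := {w | w ≠ w₀ ∧ u w = c₀} with hE
  set V : Set ℂ := {w | w ≠ w₀ ∧ u w < c₀} with hV
  have hEopen : IsOpen E := by
    rw [Metric.isOpen_iff]
    rintro a ⟨ha, hua⟩
    refine ⟨‖a - w₀‖/2, by have := habs_pos a ha; linarith, ?_⟩
    · intro w hw
      exact hprop a ha hua w hw
  have hVopen : IsOpen V := by
    rw [isOpen_iff_mem_nhds]
    rintro x ⟨hx1, hx2⟩
    have h1 : ∀ᶠ z in nhds x, u z < c₀ :=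
      usc_at_of_on isOpen_compl_singleton hsub.1 hx1 c₀ hx2
    have h2 : ∀ᶠ z in nhds x, z ≠ w₀ := isOpen_compl_singleton.mem_nhds hx1
    exact h2.and h1
  have hEne : (({w₀}ᶜ : Set ℂ) ∩ E).Nonempty := by
    obtain ⟨w, hw1, hw2⟩ := m_attained hsub hM one_pos
    have hwne : w ≠ w₀ := by
      have : 0 < ‖w - w₀‖ := by rw [hw1]; norm_num
      rw [norm_pos_iff] at this
      exact sub_ne_zero.mp this
    exact ⟨w, hwne, hwne, hw2⟩
  have hcover : ({w₀}ᶜ : Set ℂ) ⊆ E ∪ V := by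
    intro w hw
    have hwne : w ≠ w₀ := hw
    rcases lt_or_eq_of_le (hle w hwne) with h | h
    · exact Or.inr ⟨hwne, h⟩
    · exact Or.inl ⟨hwne, h⟩
  have hpre : IsPreconnected ({w₀}ᶜ : Set ℂ) :=
    (isConnected_compl_singleton_of_one_lt_rank (rank_real_complex ▸ Nat.one_lt_ofNat) w₀).isPreconnected
  refine ⟨c₀, fun w hw => ?_⟩
  by_contra hne
  have hwV : (({w₀}ᶜ : Set ℂ) ∩ V).Nonempty :=
    ⟨w, hw, hw, lt_of_le_of_ne (hle w hw) hne⟩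
  obtain ⟨z, _, ⟨_, hz2⟩, ⟨_, hz4⟩⟩ := hpre E V hEopen hVopen hcover hEne hwV
  rw [hz2] at hz4
  exact lt_irrefl _ hz4
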